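/- Let m(t) = e^{−it}·cosh(sin t)·sinh(sin t) = (1/2) e^{−it} sinh(2 sin t) for real t. Then the signed area of the closed curve m over one period 2π, namely (1/2)∫_0^{2π} Im( conj(m(t)) m'(t) ) dt, equals −(π/8)·(I₀(4) − 1), where I₀ is the modified Bessel function of the first kind of order 0. -/
import Mathlib


open Complex Real intervalIntegral

/-- The modified Bessel function of the first kind of order `0`,
`I₀(x) = (1/(2π)) ∫_0^{2π} e^{x cos θ} dθ`. -/
noncomputable def besselI₀ (x : ℝ) : ℝ :=
  (1 / (2 * π)) * ∫ θ in (0:ℝ)..2 * π, Real.exp (x * Real.cos θ)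

lemma sinh_sq_aux (y : ℝ) :
    -(Real.sinh y) ^ 2 / 4 = (2 - Real.exp (2 * y) - Real.exp (-(2 * y))) / 16 := by
  rw [Real.sinh_eq, show (2:ℝ) * y = y + y by ring, Real.exp_neg, Real.exp_neg,
    Real.exp_add]
  have h := Real.exp_ne_zero y
  field_simp
  ring

theorem signed_area_of_m_bessel
    (m : ℝ → ℂ)
    (hm : ∀ t : ℝ, m t = (1/2) * Complex.exp (-Complex.I * t)
        * Complex.sinh (2 * Complex.sin t)) :
    (1/2) * (∫ t in (0:ℝ)..2 * π, ((starRingEnd ℂ) (m t) * deriv m t).im) =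
      -(π / 8) * (besselI₀ 4 - 1) := by
  have hm' : m = fun t : ℝ => (1/2 : ℂ) * Complex.exp (-Complex.I * t)
      * Complex.sinh (2 * Complex.sin t) := funext hm
  subst hm'
  -- derivative
  have hder : ∀ t : ℝ, HasDerivAt (fun t : ℝ => (1/2 : ℂ) * Complex.exp (-Complex.I * t)
      * Complex.sinh (2 * Complex.sin t))
      ((1/2 : ℂ) * (Complex.exp (-Complex.I * t) * (-Complex.I)) * Complex.sinh (2 * Complex.sin t)
        + (1/2 : ℂ) * Complex.exp (-Complex.I * t)
          * (Complex.cosh (2 * Complex.sin t) * (2 * Complex.cos t))) t := by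
    intro t
    have hlin : HasDerivAt (fun z : ℂ => -Complex.I * z) (-Complex.I) (t:ℂ) := by
      simpa using (hasDerivAt_id (t:ℂ)).const_mul (-Complex.I)
    have h1 := hlin.cexp
    have hsin : HasDerivAt (fun z : ℂ => 2 * Complex.sin z) (2 * Complex.cos (t:ℂ)) (t:ℂ) :=
      (Complex.hasDerivAt_sin (t:ℂ)).const_mul 2
    have h2 := hsin.csinh
    exact ((h1.const_mul (1/2 : ℂ)).mul h2).comp_ofReal
  -- pointwise value of the integrand
  have hpt : ∀ t : ℝ, (((starRingEnd ℂ) ((1/2 : ℂ) * Complex.exp (-Complex.I * t)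
      * Complex.sinh (2 * Complex.sin t))) * deriv (fun t : ℝ => (1/2 : ℂ)
      * Complex.exp (-Complex.I * t) * Complex.sinh (2 * Complex.sin t)) t).im
      = -(Real.sinh (2 * Real.sin t)) ^ 2 / 4 := by
    intro t
    rw [(hder t).deriv]
    have hS : Complex.sinh (2 * Complex.sin (t:ℂ)) = ((Real.sinh (2 * Real.sin t) : ℝ) : ℂ) := by
      push_cast; ring
    have hC : Complex.cosh (2 * Complex.sin (t:ℂ)) = ((Real.cosh (2 * Real.sin t) : ℝ) : ℂ) := by
      push_cast; ring
    have hc : Complex.cos (t:ℂ) = ((Real.cos t : ℝ) : ℂ) := by push_cast; ring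
    rw [hS, hC, hc]
    have hconj : (starRingEnd ℂ) ((1/2 : ℂ) * Complex.exp (-Complex.I * t)
        * ((Real.sinh (2 * Real.sin t) : ℝ) : ℂ))
        = (1/2 : ℂ) * Complex.exp (Complex.I * t) * ((Real.sinh (2 * Real.sin t) : ℝ) : ℂ) := by
      simp only [map_mul, map_div₀, map_one, map_ofNat, ← Complex.exp_conj, map_neg,
        Complex.conj_I, Complex.conj_ofReal, neg_mul, neg_neg]
    rw [hconj]
    have hE : Complex.exp (Complex.I * t) * Complex.exp (-Complex.I * t) = 1 := by
      rw [← Complex.exp_add, show Complex.I * (t:ℂ) + -Complex.I * t = 0 by ring,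
        Complex.exp_zero]
    have key : (1/2 : ℂ) * Complex.exp (Complex.I * t) * ((Real.sinh (2 * Real.sin t) : ℝ) : ℂ) *
        ((1/2 : ℂ) * (Complex.exp (-Complex.I * t) * (-Complex.I))
            * ((Real.sinh (2 * Real.sin t) : ℝ) : ℂ)
          + (1/2 : ℂ) * Complex.exp (-Complex.I * t)
            * (((Real.cosh (2 * Real.sin t) : ℝ) : ℂ) * (2 * ((Real.cos t : ℝ) : ℂ))))
        = ((Real.cos t * Real.cosh (2 * Real.sin t) * Real.sinh (2 * Real.sin t) / 2 : ℝ) : ℂ)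
          + ((-(Real.sinh (2 * Real.sin t)) ^ 2 / 4 : ℝ) : ℂ) * Complex.I := by
      have h0 := Complex.exp_ne_zero (Complex.I * (t:ℂ))
      have hinv : Complex.exp (-Complex.I * t) = (Complex.exp (Complex.I * t))⁻¹ := by
        rw [show -Complex.I * (t:ℂ) = -(Complex.I * t) by ring, Complex.exp_neg]
      rw [hinv]
      push_cast
      field_simp
      ring
    rw [key, Complex.add_im, Complex.mul_im]
    simp only [Complex.ofReal_im, Complex.ofReal_re, Complex.I_im, Complex.I_re,
      mul_one, mul_zero, add_zero, zero_add]
  rw [intervalIntegral.integral_congr (g := fun t : ℝ => -(Real.sinh (2 * Real.sin t)) ^ 2 / 4)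
    (fun t _ => hpt t)]
  -- rewrite the integrand using exponentials of shifted cosines
  have hpt2 : ∀ t : ℝ, -(Real.sinh (2 * Real.sin t)) ^ 2 / 4
      = (2 - Real.exp (4 * Real.cos (t - π/2)) - Real.exp (4 * Real.cos (t + π/2))) / 16 := by
    intro t
    rw [Real.cos_sub_pi_div_two, Real.cos_add_pi_div_two, sinh_sq_aux (2 * Real.sin t)]
    ring_nf
  rw [intervalIntegral.integral_congr (g := fun t : ℝ =>
    (2 - Real.exp (4 * Real.cos (t - π/2)) - Real.exp (4 * Real.cos (t + π/2))) / 16)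
    (fun t _ => hpt2 t)]
  have hFc : Continuous fun x : ℝ => Real.exp (4 * Real.cos x) :=
    Real.continuous_exp.comp (continuous_const.mul Real.continuous_cos)
  have hF : Function.Periodic (fun x : ℝ => Real.exp (4 * Real.cos x)) (2 * π) := by
    intro x; simp [Real.cos_add_two_pi]
  have hI1 : (∫ t in (0:ℝ)..2 * π, Real.exp (4 * Real.cos (t - π/2)))
      = ∫ θ in (0:ℝ)..2 * π, Real.exp (4 * Real.cos θ) := by
    rw [intervalIntegral.integral_comp_sub_right (fun x => Real.exp (4 * Real.cos x)) (π/2)]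
    have h := hF.intervalIntegral_add_eq (-(π/2)) 0
    rw [zero_add] at h
    rw [show (0:ℝ) - π/2 = -(π/2) by ring, show (2 * π - π/2 : ℝ) = -(π/2) + 2 * π by ring]
    exact h
  have hI2 : (∫ t in (0:ℝ)..2 * π, Real.exp (4 * Real.cos (t + π/2)))
      = ∫ θ in (0:ℝ)..2 * π, Real.exp (4 * Real.cos θ) := by
    rw [intervalIntegral.integral_comp_add_right (fun x => Real.exp (4 * Real.cos x)) (π/2)]
    have h := hF.intervalIntegral_add_eq (π/2) 0
    rw [zero_add] at h
    rw [show (0:ℝ) + π/2 = π/2 by ring, show (2 * π + π/2 : ℝ) = π/2 + 2 * π by ring]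
    exact h
  have hint1 : IntervalIntegrable (fun t : ℝ => Real.exp (4 * Real.cos (t - π/2)))
      MeasureTheory.volume 0 (2 * π) :=
    (hFc.comp (continuous_id.sub continuous_const)).intervalIntegrable _ _
  have hint2 : IntervalIntegrable (fun t : ℝ => Real.exp (4 * Real.cos (t + π/2)))
      MeasureTheory.volume 0 (2 * π) :=
    (hFc.comp (continuous_id.add continuous_const)).intervalIntegrable _ _
  have hsplit : (∫ t in (0:ℝ)..2 * π,
      (2 - Real.exp (4 * Real.cos (t - π/2)) - Real.exp (4 * Real.cos (t + π/2))) / 16)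
      = ((∫ t in (0:ℝ)..2 * π, (2:ℝ))
        - (∫ t in (0:ℝ)..2 * π, Real.exp (4 * Real.cos (t - π/2)))
        - (∫ t in (0:ℝ)..2 * π, Real.exp (4 * Real.cos (t + π/2)))) / 16 := by
    rw [intervalIntegral.integral_div, intervalIntegral.integral_sub
      ((_root_.intervalIntegrable_const).sub hint1) hint2,
      intervalIntegral.integral_sub _root_.intervalIntegrable_const hint1]
  rw [hsplit, hI1, hI2, intervalIntegral.integral_const]
  simp only [besselI₀, smul_eq_mul]
  have hπ : (π:ℝ) ≠ 0 := Real.pi_ne_zero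
  field_simp
  ring
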